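/- Let J ⊆ L∞ be a convex cone that is weak*-closed (L∞ being the dual of L¹(P)), satisfies J = J − L∞₊ and J ∩ L∞₊ = {0}, where L∞₊ is the cone of a.s. nonnegative elements of L∞. Then there exists a probability Q equivalent to P such that E_Q[φ] ≤ 0 for all φ ∈ J. -/

import Mathlib

open MeasureTheory Filter Set
open scoped ENNReal NNReal

noncomputable section

variable {Ω : Type*} [MeasurableSpace Ω]

/-- The nonnegative orthant `L⁰₊` of `L⁰`: (a.e. classes of) random variables that are
a.e. nonnegative.  We work with representatives, requiring a.e.-measurability. -/
def L0plus (P : Measure Ω) : Set (Ω → ℝ) :=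
  {f | AEMeasurable f P ∧ 0 ≤ᵐ[P] f}

/-- A set `A ⊆ L⁰₊` is bounded (in probability) if `lim_{ℓ→∞} sup_{f∈A} P[f>ℓ] = 0`. -/
def BoundedInProb (P : Measure Ω) (A : Set (Ω → ℝ)) : Prop :=
  Tendsto (fun ℓ : ℝ => ⨆ f ∈ A, P {ω | ℓ < f ω}) atTop (nhds 0)

/-- A set `K` is closed in probability: it contains every (a.e.-measurable) limit in
measure of sequences from `K`.  (Convergence in probability is metrizable, so sequential
closedness is closedness.) -/
def ClosedInProb (P : Measure Ω) (K : Set (Ω → ℝ)) : Prop :=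
  ∀ (f : ℕ → Ω → ℝ) (g : Ω → ℝ), (∀ n, f n ∈ K) → AEMeasurable g P →
    TendstoInMeasure P f atTop g → g ∈ K

/-- `g` is strictly positive on `C`: `P[f > 0, g = 0] = 0` for every `f ∈ C`. -/
def StrictlyPositiveOn (P : Measure Ω) (C : Set (Ω → ℝ)) (g : Ω → ℝ) : Prop :=
  ∀ f ∈ C, P ({ω | 0 < f ω} ∩ {ω | g ω = 0}) = 0

/-- `Q` is a probability measure equivalent to `P`. -/
def EquivProb (P Q : Measure Ω) : Prop :=
  IsProbabilityMeasure Q ∧ Q ≪ P ∧ P ≪ Q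

/-- `g` is a numéraire of `C`: it is strictly positive on `C` and there is an equivalent
probability `Q` with `E_Q[(f/g)·1_{g>0}] ≤ Q[g>0]` for all `f ∈ C`. -/
def IsNumeraire (P : Measure Ω) (C : Set (Ω → ℝ)) (g : Ω → ℝ) : Prop :=
  StrictlyPositiveOn P C g ∧
    ∃ Q : Measure Ω, EquivProb P Q ∧
      ∀ f ∈ C, (∫⁻ ω in {ω | 0 < g ω}, ENNReal.ofReal (f ω / g ω) ∂Q) ≤ Q {ω | 0 < g ω}

/-- The class `CS_g(C)` of subsets `K` of `L⁰₊` with (CS1) `C ⊆ K`, (CS2) `K` convex and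
closed in probability, (CS3) `f ∈ K`, `δ ≥ 0`, `(1+δ)f − δg ∈ L⁰₊` imply `(1+δ)f − δg ∈ K`. -/
def CSclass (P : Measure Ω) (C : Set (Ω → ℝ)) (g : Ω → ℝ) : Set (Set (Ω → ℝ)) :=
  {K | K ⊆ L0plus P ∧ C ⊆ K ∧ Convex ℝ K ∧ ClosedInProb P K ∧
    ∀ f ∈ K, ∀ δ : ℝ, 0 ≤ δ →
      (fun ω => (1 + δ) * f ω - δ * g ω) ∈ L0plus P →
      (fun ω => (1 + δ) * f ω - δ * g ω) ∈ K}

/-- `cs_g(C)`, the smallest element of `CS_g(C)`. -/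
def csSet (P : Measure Ω) (C : Set (Ω → ℝ)) (g : Ω → ℝ) : Set (Ω → ℝ) :=
  ⋂ K ∈ CSclass P C g, K

/-- The solid hull of `K` in `L⁰₊`. -/
def SolidHull (P : Measure Ω) (K : Set (Ω → ℝ)) : Set (Ω → ℝ) :=
  {f | f ∈ L0plus P ∧ ∃ h ∈ K, f ≤ᵐ[P] h}

/-- `L∞`: essentially bounded (a.e.-measurable) random variables. -/
def Linf (P : Measure Ω) : Set (Ω → ℝ) :=
  {f | AEMeasurable f P ∧ ∃ c : ℝ, ∀ᵐ ω ∂P, |f ω| ≤ c}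

/-- `L∞₊ = L⁰₊ ∩ L∞`. -/
def LinfPlus (P : Measure Ω) : Set (Ω → ℝ) := L0plus P ∩ Linf P

/-- `L` is solid: `0 ≤ u ≤ h` a.s. with `h ∈ L` implies `u ∈ L`. -/
def IsSolid (P : Measure Ω) (L : Set (Ω → ℝ)) : Prop :=
  ∀ u : Ω → ℝ, AEMeasurable u P → 0 ≤ᵐ[P] u → (∃ h ∈ L, u ≤ᵐ[P] h) → u ∈ L

/-- `A_α := α (L − 1) = { α(f − 1) : f ∈ L }`. -/
def Aset (L : Set (Ω → ℝ)) (α : ℝ) : Set (Ω → ℝ) :=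
  (fun f : Ω → ℝ => fun ω => α * (f ω - 1)) '' L

/-- `J := ⋃_{α ≥ 0} A_α`. -/
def Jset (L : Set (Ω → ℝ)) : Set (Ω → ℝ) := ⋃ α ∈ Ici (0 : ℝ), Aset L α

/-- The weak* topology on (representatives of) `L∞`, viewed as the dual of `L¹(P)`:
the topology induced by the maps `φ ↦ ∫ φ·u dP` for integrable `u`. -/
def weakStarTop (P : Measure Ω) : TopologicalSpace (Ω → ℝ) :=
  ⨅ (u : Ω → ℝ) (_ : Integrable u P),
    TopologicalSpace.induced (fun φ : Ω → ℝ => ∫ ω, φ ω * u ω ∂P) inferInstance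

/-- The witness set `K := { h ∈ L⁰₊ : P[h>0, g=0]=0 and E_Q[(h/g)·1_{g>0}] ≤ Q[g>0] }`. -/
def Kwitness (P Q : Measure Ω) (g : Ω → ℝ) : Set (Ω → ℝ) :=
  {h | h ∈ L0plus P ∧ P ({ω | 0 < h ω} ∩ {ω | g ω = 0}) = 0 ∧
    (∫⁻ ω in {ω | 0 < g ω}, ENNReal.ofReal (h ω / g ω) ∂Q) ≤ Q {ω | 0 < g ω}}

/-- The set `C` of the example: outcomes `1 − θ₁ + (θ₁ + θ₂)ξ` for `θ` in the constraint
set `Θ = { θ ∈ ℝ₊² : θ₂ ≤ √θ₁ ≤ 1 }`. -/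
def exampleC (ξ : Ω → ℝ) : Set (Ω → ℝ) :=
  {f | ∃ θ : ℝ × ℝ, (0 ≤ θ.1 ∧ 0 ≤ θ.2 ∧ θ.2 ≤ Real.sqrt θ.1 ∧ Real.sqrt θ.1 ≤ 1) ∧
    f = fun ω => 1 - θ.1 + (θ.1 + θ.2) * ξ ω}

/-- Kreps–Yan: a weak*-closed convex cone `J ⊆ L∞` with `J = J − L∞₊` and
`J ∩ L∞₊ = {0}` is separated from `L∞₊` by an equivalent probability: there exists
`Q ∼ P` with `E_Q[φ] ≤ 0` for all `φ ∈ J`. -/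
lemma KY_mul_integrable (P : Measure Ω) {φ u : Ω → ℝ} (hφ : φ ∈ Linf P)
    (hu : Integrable u P) : Integrable (fun ω => φ ω * u ω) P := by
  obtain ⟨hm, c, hc⟩ := hφ
  exact hu.bdd_mul hm.aestronglyMeasurable (hc.mono fun ω h => by simpa using h)

lemma KY_sep (P : Measure Ω) [IsProbabilityMeasure P]
    (J : Set (Ω → ℝ)) (hJ : J ⊆ Linf P) (hconv : Convex ℝ J)
    (hcone : ∀ c : ℝ, 0 ≤ c → ∀ φ ∈ J, c • φ ∈ J)
    (hclosed : (@closure _ (weakStarTop P) J) ∩ Linf P ⊆ J)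
    (hsub : ∀ φ ∈ J, ∀ h ∈ LinfPlus P, φ - h ∈ J)
    (hpos : ∀ φ ∈ J, φ ∈ LinfPlus P → φ =ᵐ[P] (fun _ => (0:ℝ)))
    (hJ0 : (0 : Ω → ℝ) ∈ J)
    (A : Set Ω) (hA : MeasurableSet A) (hPA : P A ≠ 0) :
    ∃ u : Ω → ℝ, Measurable u ∧ Integrable u P ∧ (∀ ω, 0 ≤ u ω) ∧
      (∀ φ ∈ J, ∫ ω, φ ω * u ω ∂P ≤ 0) ∧ 0 < ∫ ω in A, u ω ∂P := by
  classical
  set ι := {u : Ω → ℝ // Integrable u P} with hι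
  set T : ι → (Ω → ℝ) → ℝ := fun p φ => ∫ ω, φ ω * p.1 ω ∂P with hT
  have hτ : weakStarTop P = ⨅ p : ι, TopologicalSpace.induced (T p) inferInstance := by
    rw [weakStarTop, iInf_subtype']
  set x : Ω → ℝ := A.indicator (fun _ => (1:ℝ)) with hx
  have hxLinf : x ∈ Linf P :=
    ⟨(measurable_const.indicator hA).aemeasurable, 1, ae_of_all _ fun ω => by
      by_cases h : ω ∈ A <;> simp [hx, Set.indicator, h]⟩
  have hxJ : x ∉ J := by
    intro hxJ
    have hxP : x ∈ LinfPlus P :=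
      ⟨⟨hxLinf.1, ae_of_all _ fun ω => Set.indicator_nonneg (fun _ _ => zero_le_one) ω⟩, hxLinf⟩
    have h0 := hpos x hxJ hxP
    have hsub' : A ⊆ {ω | ¬ x ω = 0} := fun ω hω => by
      simp [hx, Set.indicator_of_mem hω]
      exact hω
    exact hPA (measure_mono_null hsub' (by simpa [Filter.EventuallyEq, ae_iff] using h0))
  have hxcl : x ∉ @closure _ (weakStarTop P) J := fun hcl => hxJ (hclosed ⟨hcl, hxLinf⟩)
  have hnhds : Jᶜ ∈ @nhds _ (weakStarTop P) x := by
    letI := weakStarTop P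
    rw [← mem_interior_iff_mem_nhds, interior_compl]
    exact hxcl
  rw [hτ, _root_.nhds_iInf] at hnhds
  simp only [nhds_induced] at hnhds
  rw [Filter.mem_iInf] at hnhds
  obtain ⟨I, hIfin, V, hV, hJV⟩ := hnhds
  haveI : Fintype I := hIfin.fintype
  have hW : ∀ i : I, ∃ ε : ℝ, 0 < ε ∧ ∀ φ : Ω → ℝ, |T i.1 φ - T i.1 x| < ε → φ ∈ V i := by
    intro i
    obtain ⟨W, hWn, hWV⟩ := Filter.mem_comap.mp (hV i)
    obtain ⟨ε, hε, hball⟩ := Metric.mem_nhds_iff.mp hWn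
    exact ⟨ε, hε, fun φ hφ => hWV (hball (by simpa [Real.dist_eq] using hφ))⟩
  choose ε hε hεV using hW
  set S : (Ω → ℝ) → (I → ℝ) := fun φ i => T i.1 φ with hS
  have hTsmul : ∀ (k : ℝ) (φ : Ω → ℝ) (i : I), T i.1 (k • φ) = k * T i.1 φ := by
    intro k φ i
    simp only [hT]
    rw [show (fun ω => (k • φ) ω * (i.1 : ι).1 ω) = fun ω => k * (φ ω * (i.1 : ι).1 ω) from
      funext fun ω => by simp [mul_assoc]]
    exact integral_const_mul _ _
  have hTlin : ∀ (a b : ℝ) (φ ψ : Ω → ℝ), φ ∈ Linf P → ψ ∈ Linf P → ∀ i : I,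
      T i.1 (a • φ + b • ψ) = a * T i.1 φ + b * T i.1 ψ := by
    intro a b φ ψ hφ hψ i
    have h1 : Integrable (fun ω => φ ω * (i.1 : ι).1 ω) P := KY_mul_integrable P hφ i.1.2
    have h2 : Integrable (fun ω => ψ ω * (i.1 : ι).1 ω) P := KY_mul_integrable P hψ i.1.2
    simp only [hT]
    rw [show (fun ω => (a • φ + b • ψ) ω * (i.1 : ι).1 ω)
        = fun ω => a * (φ ω * (i.1 : ι).1 ω) + b * (ψ ω * (i.1 : ι).1 ω) from
      funext fun ω => by simp only [Pi.add_apply, Pi.smul_apply, smul_eq_mul]; ring]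
    rw [integral_add (h1.const_mul a) (h2.const_mul b), integral_const_mul, integral_const_mul]
  have hSJconv : Convex ℝ (S '' J) := by
    rintro _ ⟨φ, hφ, rfl⟩ _ ⟨ψ, hψ, rfl⟩ a b ha hb hab
    refine ⟨a • φ + b • ψ, hconv hφ hψ ha hb hab, ?_⟩
    funext i
    simp only [hS, Pi.add_apply, Pi.smul_apply, smul_eq_mul]
    exact hTlin a b φ ψ (hJ hφ) (hJ hψ) i
  have hSx : S x ∉ closure (S '' J) := by
    intro hmem
    have hU : (Set.univ.pi fun i : I => Metric.ball (S x i) (ε i)) ∈ nhds (S x) :=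
      set_pi_mem_nhds Set.finite_univ fun i _ => Metric.ball_mem_nhds _ (hε i)
    obtain ⟨y, hy1, φ, hφJ, rfl⟩ := mem_closure_iff_nhds.mp hmem _ hU
    have hcompl : φ ∈ Jᶜ := by
      rw [hJV]
      refine Set.mem_iInter.mpr fun i => hεV i φ ?_
      have := hy1 i (Set.mem_univ i)
      simpa [Real.dist_eq, hS] using this
    exact hcompl hφJ
  obtain ⟨f, c, hfc, hcx⟩ := geometric_hahn_banach_closed_point hSJconv.closure isClosed_closure hSx
  have hS0 : S (0 : Ω → ℝ) = 0 := by
    funext i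
    simp [hS, hT]
  have hc0 : 0 < c := by
    have h := hfc _ (subset_closure ⟨0, hJ0, hS0⟩)
    rwa [map_zero] at h
  have hfJ : ∀ φ ∈ J, f (S φ) ≤ 0 := by
    intro φ hφ
    by_contra hpos'
    push_neg at hpos'
    set k := (c + 1) / f (S φ) with hk
    have hk0 : 0 ≤ k := le_of_lt (div_pos (by linarith) hpos')
    have hkJ : k • φ ∈ J := hcone k hk0 φ hφ
    have hlt := hfc _ (subset_closure ⟨k • φ, hkJ, rfl⟩)
    rw [show S (k • φ) = k • S φ from funext fun i => hTsmul k φ i, _root_.map_smul, smul_eq_mul,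
      hk, div_mul_cancel₀ _ (ne_of_gt hpos')] at hlt
    linarith
  set e : I → (I → ℝ) := fun i j => if i = j then 1 else 0 with he
  set v : Ω → ℝ := fun ω => ∑ i : I, f (e i) * (i.1 : ι).1 ω with hv
  have hvint : Integrable v P := integrable_finset_sum _ fun i _ => i.1.2.const_mul _
  have hfS : ∀ φ : Ω → ℝ, φ ∈ Linf P → f (S φ) = ∫ ω, φ ω * v ω ∂P := by
    intro φ hφ
    have h1 : ∀ i : I, Integrable (fun ω => f (e i) * (φ ω * (i.1 : ι).1 ω)) P :=
      fun i => (KY_mul_integrable P hφ i.1.2).const_mul _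
    have h2 : f (S φ) = ∑ i : I, S φ i * f (e i) := by
      conv_lhs => rw [pi_eq_sum_univ (S φ)]
      rw [map_sum]
      refine Finset.sum_congr rfl fun i _ => ?_
      rw [_root_.map_smul, smul_eq_mul]
    rw [h2]
    calc ∑ i : I, S φ i * f (e i)
        = ∑ i : I, ∫ ω, f (e i) * (φ ω * (i.1 : ι).1 ω) ∂P := by
          refine Finset.sum_congr rfl fun i _ => ?_
          rw [integral_const_mul]
          simp only [hS, hT]
          ring
      _ = ∫ ω, ∑ i : I, f (e i) * (φ ω * (i.1 : ι).1 ω) ∂P :=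
          (integral_finset_sum _ fun i _ => h1 i).symm
      _ = ∫ ω, φ ω * v ω ∂P := by
          refine integral_congr_ae (ae_of_all _ fun ω => ?_)
          simp only [hv, Finset.mul_sum]
          exact Finset.sum_congr rfl fun i _ => by ring
  have hvJ : ∀ φ ∈ J, ∫ ω, φ ω * v ω ∂P ≤ 0 := fun φ hφ => (hfS φ (hJ hφ)) ▸ hfJ φ hφ
  have hvA : 0 < ∫ ω in A, v ω ∂P := by
    have h1 : f (S x) = ∫ ω, x ω * v ω ∂P := hfS x hxLinf
    have h2 : ∫ ω, x ω * v ω ∂P = ∫ ω in A, v ω ∂P := by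
      rw [← integral_indicator hA]
      refine integral_congr_ae (ae_of_all _ fun ω => ?_)
      by_cases h : ω ∈ A <;> simp [hx, Set.indicator, h]
    linarith [hcx]
  have hvnn : 0 ≤ᵐ[P] v := by
    refine ae_nonneg_of_forall_setIntegral_nonneg hvint fun B hB _ => ?_
    have hB1 : (B.indicator (fun _ => (1:ℝ))) ∈ LinfPlus P :=
      ⟨⟨(measurable_const.indicator hB).aemeasurable,
        ae_of_all _ fun ω => Set.indicator_nonneg (fun _ _ => zero_le_one) ω⟩,
       (measurable_const.indicator hB).aemeasurable, 1, ae_of_all _ fun ω => by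
        by_cases h : ω ∈ B <;> simp [Set.indicator, h]⟩
    have hmem : (0 : Ω → ℝ) - B.indicator (fun _ => (1:ℝ)) ∈ J := hsub 0 hJ0 _ hB1
    have hle := hvJ _ hmem
    have heq : ∫ ω, ((0 : Ω → ℝ) - B.indicator (fun _ => (1:ℝ))) ω * v ω ∂P
        = - ∫ ω in B, v ω ∂P := by
      rw [← integral_indicator hB, ← integral_neg]
      refine integral_congr_ae (ae_of_all _ fun ω => ?_)
      by_cases h : ω ∈ B <;> simp [Set.indicator, h]
    rw [heq] at hle
    linarith
  obtain ⟨vm, hvm, hveq⟩ := hvint.1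
  set u : Ω → ℝ := fun ω => max (vm ω) 0 with hu
  have hum : Measurable u := hvm.measurable.max measurable_const
  have huv : v =ᵐ[P] u := by
    filter_upwards [hveq, hvnn] with ω h1 h2
    simp only [hu, ← h1]
    exact (max_eq_left h2).symm
  refine ⟨u, hum, hvint.congr huv, fun ω => le_max_right _ _, fun φ hφ => ?_, ?_⟩
  · have h : (fun ω => φ ω * u ω) =ᵐ[P] fun ω => φ ω * v ω :=
      huv.symm.mono fun ω h => congrArg (fun t => φ ω * t) h
    exact (integral_congr_ae h).trans_le (hvJ φ hφ)
  · exact lt_of_lt_of_eq hvA (integral_congr_ae (ae_restrict_of_ae huv))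

lemma KY_exhaust (P : Measure Ω) [IsProbabilityMeasure P] (J : Set (Ω → ℝ)) (hJ : J ⊆ Linf P)
    (hsep : ∀ A : Set Ω, MeasurableSet A → P A ≠ 0 →
      ∃ u : Ω → ℝ, Measurable u ∧ Integrable u P ∧ (∀ ω, 0 ≤ u ω) ∧
        (∀ φ ∈ J, ∫ ω, φ ω * u ω ∂P ≤ 0) ∧ 0 < ∫ ω in A, u ω ∂P) :
    ∃ w : Ω → ℝ, Measurable w ∧ Integrable w P ∧ (∀ ω, 0 ≤ w ω) ∧
      (∀ φ ∈ J, ∫ ω, φ ω * w ω ∂P ≤ 0) ∧ ∀ᵐ ω ∂P, 0 < w ω := by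
  classical
  set G : Set (Ω → ℝ) := {u | Measurable u ∧ Integrable u P ∧ (∀ ω, 0 ≤ u ω) ∧
    ∀ φ ∈ J, ∫ ω, φ ω * u ω ∂P ≤ 0} with hG
  have hsupp_eq : ∀ u : Ω → ℝ, (∀ ω, 0 ≤ u ω) → Function.support u = {ω | 0 < u ω} := by
    intro u hu
    ext ω
    simp only [Function.mem_support, Set.mem_setOf_eq]
    exact ⟨fun h => (hu ω).lt_of_ne (Ne.symm h), fun h => h.ne'⟩
  set t : ℝ≥0∞ := ⨆ u ∈ G, P {ω | 0 < u ω} with ht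
  have ht1 : t ≤ 1 := by
    refine iSup_le fun u => iSup_le fun _ => ?_
    calc P {ω | 0 < u ω} ≤ P Set.univ := measure_mono (subset_univ _)
      _ = 1 := measure_univ
  have htop : t ≠ ⊤ := (ht1.trans_lt ENNReal.one_lt_top).ne
  obtain ⟨u₀, hu₀m, hu₀i, hu₀n, hu₀J, hu₀A⟩ := hsep Set.univ MeasurableSet.univ (by simp)
  have hu₀G : u₀ ∈ G := ⟨hu₀m, hu₀i, hu₀n, hu₀J⟩
  have ht0 : t ≠ 0 := by
    intro h0
    have hle : P {ω | 0 < u₀ ω} ≤ t := le_iSup₂_of_le u₀ hu₀G le_rfl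
    rw [h0, le_zero_iff] at hle
    rw [setIntegral_univ] at hu₀A
    have := (integral_pos_iff_support_of_nonneg hu₀n hu₀i).mp hu₀A
    rw [hsupp_eq u₀ hu₀n, hle] at this
    exact absurd this (lt_irrefl 0)
  have hseq : ∀ n : ℕ, ∃ u ∈ G, t - (((n : ℝ≥0∞) + 1))⁻¹ < P {ω | 0 < u ω} := by
    intro n
    have hlt : t - ((n : ℝ≥0∞) + 1)⁻¹ < t :=
      ENNReal.sub_lt_self htop ht0 (by simp)
    rw [ht] at hlt
    obtain ⟨u, hu⟩ := lt_iSup_iff.mp hlt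
    obtain ⟨huG, hu'⟩ := lt_iSup_iff.mp hu
    exact ⟨u, huG, hu'⟩
  choose u huG hub using hseq
  have hum : ∀ n, Measurable (u n) := fun n => (huG n).1
  have hui : ∀ n, Integrable (u n) P := fun n => (huG n).2.1
  have hun : ∀ n (ω : Ω), 0 ≤ u n ω := fun n => (huG n).2.2.1
  have huJ : ∀ n, ∀ φ ∈ J, ∫ ω, φ ω * u n ω ∂P ≤ 0 := fun n => (huG n).2.2.2
  set b : ℕ → ℝ := fun n => ∫ ω, u n ω ∂P with hb
  have hbn : ∀ n, 0 ≤ b n := fun n => integral_nonneg (hun n)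
  set c : ℕ → ℝ := fun n => (1/2)^n / (1 + b n) with hc
  have hcpos : ∀ n, 0 < c n := fun n =>
    div_pos (pow_pos (by norm_num) n) (by linarith [hbn n])
  have hcb : ∀ n, c n * b n ≤ (1/2)^n := by
    intro n
    have h1 : (0:ℝ) < 1 + b n := by linarith [hbn n]
    calc c n * b n = (1/2)^n * (b n / (1 + b n)) := by rw [hc]; ring
      _ ≤ (1/2)^n * 1 :=
        mul_le_mul_of_nonneg_left ((div_le_one h1).mpr (by linarith)) (by positivity)
      _ = (1/2)^n := mul_one _
  set W : Ω → ℝ≥0∞ := fun ω => ∑' n, ENNReal.ofReal (c n * u n ω) with hW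
  have hWm : Measurable W :=
    Measurable.ennreal_tsum fun n => (((hum n).const_mul (c n)).ennreal_ofReal)
  have hterm : ∀ n, ∫⁻ ω, ENNReal.ofReal (c n * u n ω) ∂P = ENNReal.ofReal (c n * b n) := by
    intro n
    rw [← ofReal_integral_eq_lintegral_ofReal ((hui n).const_mul _)
      (ae_of_all _ fun ω => mul_nonneg (hcpos n).le (hun n ω)), integral_const_mul]
  have hWlint : ∫⁻ ω, W ω ∂P ≠ ⊤ := by
    rw [hW]
    rw [lintegral_tsum fun n => (((hum n).const_mul (c n)).ennreal_ofReal).aemeasurable]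
    have hle : ∑' n, ∫⁻ ω, ENNReal.ofReal (c n * u n ω) ∂P
        ≤ ∑' n : ℕ, ENNReal.ofReal ((1/2)^n) := by
      refine ENNReal.tsum_le_tsum fun n => ?_
      rw [hterm n]
      exact ENNReal.ofReal_le_ofReal (hcb n)
    have hfin : (∑' n : ℕ, ENNReal.ofReal ((1/2 : ℝ)^n)) ≠ ⊤ := by
      rw [← ENNReal.ofReal_tsum_of_nonneg (fun n => by positivity)
        (summable_geometric_of_lt_one (by norm_num) (by norm_num))]
      exact ENNReal.ofReal_ne_top
    exact (hle.trans_lt (lt_top_iff_ne_top.mpr hfin)).ne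
  have hWae : ∀ᵐ ω ∂P, W ω ≠ ⊤ := by
    filter_upwards [ae_lt_top hWm hWlint] with ω h
    exact h.ne
  set w : Ω → ℝ := fun ω => (W ω).toReal with hw
  have hwm : Measurable w := hWm.ennreal_toReal
  have hwn : ∀ ω, 0 ≤ w ω := fun ω => ENNReal.toReal_nonneg
  have hsummable : ∀ ω, W ω ≠ ⊤ → Summable fun n => c n * u n ω := by
    intro ω hω
    have h := ENNReal.summable_toReal hω
    refine h.congr fun n => ?_
    rw [ENNReal.toReal_ofReal (mul_nonneg (hcpos n).le (hun n ω))]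
  have hwval : ∀ ω, W ω ≠ ⊤ → w ω = ∑' n, c n * u n ω := by
    intro ω hω
    have h1 : W ω = ENNReal.ofReal (∑' n, c n * u n ω) :=
      (ENNReal.ofReal_tsum_of_nonneg (fun n => mul_nonneg (hcpos n).le (hun n ω))
        (hsummable ω hω)).symm
    calc w ω = (W ω).toReal := rfl
      _ = ∑' n, c n * u n ω := by
          rw [h1, ENNReal.toReal_ofReal
            (tsum_nonneg fun n => mul_nonneg (hcpos n).le (hun n ω))]
  have hwi : Integrable w P := by
    refine ⟨hwm.aestronglyMeasurable, ?_⟩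
    rw [hasFiniteIntegral_iff_ofReal (ae_of_all _ hwn)]
    have : (fun ω => ENNReal.ofReal (w ω)) =ᵐ[P] W := by
      filter_upwards [hWae] with ω hω
      rw [hw, ENNReal.ofReal_toReal hω]
    rw [lintegral_congr_ae this]
    exact lt_top_iff_ne_top.mpr hWlint
  have hwJ : ∀ φ ∈ J, ∫ ω, φ ω * w ω ∂P ≤ 0 := by
    intro φ hφ
    obtain ⟨hφm, C, hφC⟩ := hJ hφ
    set F : ℕ → Ω → ℝ := fun n ω => φ ω * (c n * u n ω) with hF
    have hFm : ∀ n, AEStronglyMeasurable (F n) P := fun n =>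
      (hφm.mul ((hum n).const_mul (c n)).aemeasurable).aestronglyMeasurable
    have hFsum : ∑' n, ∫⁻ ω, ‖F n ω‖₊ ∂P ≠ ⊤ := by
      have hbd : ∀ n, ∫⁻ ω, ‖F n ω‖₊ ∂P
          ≤ ENNReal.ofReal C * ENNReal.ofReal ((1/2)^n) := by
        intro n
        have h1 : ∫⁻ ω, ‖F n ω‖₊ ∂P
            ≤ ∫⁻ ω, ENNReal.ofReal C * ENNReal.ofReal (c n * u n ω) ∂P := by
          refine lintegral_mono_ae (hφC.mono fun ω hω => ?_)
          rw [hF]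
          simp only
          rw [show φ ω * (c n * u n ω) = φ ω * (c n * u n ω) from rfl]
          calc (‖φ ω * (c n * u n ω)‖₊ : ℝ≥0∞)
              = (‖φ ω‖₊ : ℝ≥0∞) * ‖c n * u n ω‖₊ := by
                rw [nnnorm_mul]; simp [ENNReal.coe_mul]
            _ ≤ ENNReal.ofReal C * ENNReal.ofReal (c n * u n ω) := by
                refine mul_le_mul' ?_ ?_
                · rw [← enorm_eq_nnnorm, Real.enorm_eq_ofReal_abs]
                  exact ENNReal.ofReal_le_ofReal hω
                · rw [← enorm_eq_nnnorm, Real.enorm_eq_ofReal_abs,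
                    abs_of_nonneg (mul_nonneg (hcpos n).le (hun n ω))]
        rw [lintegral_const_mul _ (((hum n).const_mul (c n)).ennreal_ofReal), hterm n] at h1
        exact h1.trans (mul_le_mul_right (ENNReal.ofReal_le_ofReal (hcb n)) _)
      have hle : ∑' n, ∫⁻ ω, ‖F n ω‖₊ ∂P
          ≤ ENNReal.ofReal C * ∑' n : ℕ, ENNReal.ofReal ((1/2)^n) := by
        rw [← ENNReal.tsum_mul_left]
        exact ENNReal.tsum_le_tsum hbd
      have hfin : (∑' n : ℕ, ENNReal.ofReal ((1/2 : ℝ)^n)) ≠ ⊤ := by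
        rw [← ENNReal.ofReal_tsum_of_nonneg (fun n => by positivity)
          (summable_geometric_of_lt_one (by norm_num) (by norm_num))]
        exact ENNReal.ofReal_ne_top
      exact (hle.trans_lt (ENNReal.mul_lt_top ENNReal.ofReal_lt_top
        (lt_top_iff_ne_top.mpr hfin))).ne
    have hkey := integral_tsum hFm hFsum
    have heq : ∫ ω, φ ω * w ω ∂P = ∑' n, ∫ ω, F n ω ∂P := by
      rw [← hkey]
      refine integral_congr_ae ?_
      filter_upwards [hWae] with ω hω
      rw [hwval ω hω, ← tsum_mul_left]
    rw [heq]
    refine tsum_nonpos fun n => ?_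
    have : (fun ω => F n ω) = fun ω => c n * (φ ω * u n ω) := by
      funext ω; rw [hF]; ring
    rw [this, integral_const_mul]
    exact mul_nonpos_of_nonneg_of_nonpos (hcpos n).le (huJ n φ hφ)
  -- w > 0 a.e.
  have hwG : w ∈ G := ⟨hwm, hwi, hwn, hwJ⟩
  have hwsupp : ∀ n, ∀ᵐ ω ∂P, 0 < u n ω → 0 < w ω := by
    intro n
    filter_upwards [hWae] with ω hω hpos
    rw [hwval ω hω]
    have hle : c n * u n ω ≤ ∑' k, c k * u k ω :=
      Summable.le_tsum (hsummable ω hω) n fun k _ => mul_nonneg (hcpos k).le (hun k ω)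
    exact lt_of_lt_of_le (mul_pos (hcpos n) hpos) hle
  have hwt : t ≤ P {ω | 0 < w ω} := by
    have hmono : ∀ n, P {ω | 0 < u n ω} ≤ P {ω | 0 < w ω} :=
      fun n => measure_mono_ae (hwsupp n)
    have hstep : ∀ n : ℕ, t ≤ P {ω | 0 < w ω} + ((n : ℝ≥0∞) + 1)⁻¹ := by
      intro n
      have := (hub n).le.trans (hmono n)
      exact tsub_le_iff_right.mp this
    refine ENNReal.le_of_forall_pos_le_add fun ε hε _ => ?_
    obtain ⟨n, hn⟩ := ENNReal.exists_inv_nat_lt (by exact_mod_cast hε.ne' : (ε : ℝ≥0∞) ≠ 0)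
    refine (hstep n).trans (add_le_add_right ?_ _)
    refine le_trans ?_ hn.le
    exact ENNReal.inv_le_inv.mpr (by simp)
  have hA0 : P {ω | w ω = 0} = 0 := by
    by_contra hPA
    set A : Set Ω := {ω | w ω = 0} with hA
    have hAm : MeasurableSet A := hwm (measurableSet_singleton 0)
    obtain ⟨v, hvm, hvi, hvn, hvJ, hvA⟩ := hsep A hAm hPA
    have hvposA : 0 < P ({ω | 0 < v ω} ∩ A) := by
      have h1 : 0 < ∫ ω, v ω ∂(P.restrict A) := hvA
      have h2 := (integral_pos_iff_support_of_nonneg hvn hvi.restrict).mp h1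
      rw [hsupp_eq v hvn] at h2
      rwa [Measure.restrict_apply (measurableSet_lt measurable_const hvm)] at h2
    set z : Ω → ℝ := fun ω => w ω + v ω with hz
    have hzG : z ∈ G := by
      refine ⟨hwm.add hvm, hwi.add hvi, fun ω => add_nonneg (hwn ω) (hvn ω), fun φ hφ => ?_⟩
      have heq : (fun ω => φ ω * z ω) = fun ω => φ ω * w ω + φ ω * v ω := by
        funext ω; rw [hz]; ring
      rw [heq, integral_add (KY_mul_integrable P (hJ hφ) hwi) (KY_mul_integrable P (hJ hφ) hvi)]
      exact add_nonpos (hwJ φ hφ) (hvJ φ hφ)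
    have hzt : P {ω | 0 < z ω} ≤ t := le_iSup₂_of_le z hzG le_rfl
    have hsub2 : {ω | 0 < w ω} ∪ ({ω | 0 < v ω} ∩ A) ⊆ {ω | 0 < z ω} := by
      rintro ω (hω | ⟨hv', hA'⟩)
      · exact add_pos_of_pos_of_nonneg hω (hvn ω)
      · exact add_pos_of_nonneg_of_pos (hwn ω) hv'
    have hdisj : Disjoint {ω | 0 < w ω} ({ω | 0 < v ω} ∩ A) := by
      rw [Set.disjoint_left]
      rintro ω hω ⟨_, hA'⟩
      rw [Set.mem_setOf_eq] at hω
      rw [hA] at hA'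
      exact absurd hA' (by simp [hω.ne'])
    have hμ : P {ω | 0 < w ω} + P ({ω | 0 < v ω} ∩ A) ≤ P {ω | 0 < z ω} := by
      rw [← measure_union hdisj ((measurableSet_lt measurable_const hvm).inter hAm)]
      exact measure_mono hsub2
    have hlt : t < t + P ({ω | 0 < v ω} ∩ A) := ENNReal.lt_add_right htop hvposA.ne'
    have : t + P ({ω | 0 < v ω} ∩ A) ≤ t :=
      le_trans (add_le_add_left hwt _) (hμ.trans hzt)
    exact absurd (hlt.trans_le this) (lt_irrefl t)
  refine ⟨w, hwm, hwi, hwn, hwJ, ?_⟩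
  rw [ae_iff]
  have : {ω | ¬ 0 < w ω} = {ω | w ω = 0} := by
    ext ω
    simp only [Set.mem_setOf_eq, not_lt]
    exact ⟨fun h => le_antisymm h (hwn ω), fun h => h.le⟩
  rw [this]
  exact hA0


theorem krepsYan_separation
    (P : Measure Ω) [IsProbabilityMeasure P]
    (J : Set (Ω → ℝ)) (hJ : J ⊆ Linf P) (hconv : Convex ℝ J)
    (hcone : ∀ c : ℝ, 0 ≤ c → ∀ φ ∈ J, c • φ ∈ J)
    (hclosed : (@closure _ (weakStarTop P) J) ∩ Linf P ⊆ J)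
    (hsub : ∀ φ ∈ J, ∀ h ∈ LinfPlus P, φ - h ∈ J)
    (hpos : ∀ φ ∈ J, φ ∈ LinfPlus P → φ =ᵐ[P] (fun _ => (0 : ℝ))) :
    ∃ Q : Measure Ω, EquivProb P Q ∧ ∀ φ ∈ J, (∫ ω, φ ω ∂Q) ≤ 0 := by
  rcases J.eq_empty_or_nonempty with hJe | ⟨φ₀, hφ₀⟩
  · exact ⟨P, ⟨inferInstance, Measure.AbsolutelyContinuous.rfl,
      Measure.AbsolutelyContinuous.rfl⟩, by simp [hJe]⟩
  have hJ0 : (0 : Ω → ℝ) ∈ J := by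
    have := hcone 0 le_rfl φ₀ hφ₀
    rwa [zero_smul] at this
  obtain ⟨w, hwm, hwi, hwn, hwJ, hwpos⟩ := KY_exhaust P J hJ
    (fun A hA hPA => KY_sep P J hJ hconv hcone hclosed hsub hpos hJ0 A hA hPA)
  set c₀ : ℝ := ∫ ω, w ω ∂P with hc₀
  have h1 : P {ω | ¬ 0 < w ω} = 0 := by rwa [ae_iff] at hwpos
  have hps : 0 < P {ω | 0 < w ω} := by
    rcases eq_or_ne (P {ω | 0 < w ω}) 0 with h | h
    · exfalso
      have hle : P Set.univ ≤ P {ω | 0 < w ω} + P {ω | ¬ 0 < w ω} := by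
        refine le_trans (measure_mono ?_) (measure_union_le _ _)
        intro ω _
        by_cases hh : 0 < w ω
        exacts [Or.inl hh, Or.inr hh]
      rw [h, h1, measure_univ] at hle
      simp at hle
    · exact pos_iff_ne_zero.mpr h
  have hsupp : Function.support w = {ω | 0 < w ω} := by
    ext ω
    simp only [Function.mem_support, Set.mem_setOf_eq]
    exact ⟨fun h => (hwn ω).lt_of_ne (Ne.symm h), fun h => h.ne'⟩
  have hc₀pos : 0 < c₀ := by
    rw [hc₀, integral_pos_iff_support_of_nonneg hwn hwi, hsupp]
    exact hps
  set d : Ω → ℝ≥0 := fun ω => Real.toNNReal (w ω / c₀) with hd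
  have hdm : Measurable d := (hwm.div_const c₀).real_toNNReal
  set Q : Measure Ω := P.withDensity (fun ω => (d ω : ℝ≥0∞)) with hQ
  have hdcoe : ∀ ω, ((d ω : ℝ≥0∞)) = ENNReal.ofReal (w ω / c₀) := fun ω => rfl
  have hdiv_nonneg : 0 ≤ᵐ[P] fun ω => w ω / c₀ :=
    ae_of_all _ fun ω => div_nonneg (hwn ω) hc₀pos.le
  have hQprob : IsProbabilityMeasure Q := by
    constructor
    rw [hQ, withDensity_apply _ MeasurableSet.univ, Measure.restrict_univ]
    have : ∫⁻ ω, ((d ω : ℝ≥0∞)) ∂P = ENNReal.ofReal (∫ ω, w ω / c₀ ∂P) := by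
      rw [ofReal_integral_eq_lintegral_ofReal (hwi.div_const c₀) hdiv_nonneg]
      rfl
    rw [this, integral_div, div_self hc₀pos.ne']
    exact ENNReal.ofReal_one
  have hQP : Q ≪ P := withDensity_absolutelyContinuous _ _
  have hPQ : P ≪ Q := by
    refine withDensity_absolutelyContinuous' (measurable_coe_nnreal_ennreal.comp hdm).aemeasurable ?_
    filter_upwards [hwpos] with ω hω
    rw [hdcoe ω]
    simp only [ne_eq, ENNReal.ofReal_eq_zero, not_le]
    exact div_pos hω hc₀pos
  refine ⟨Q, ⟨hQprob, hQP, hPQ⟩, fun φ hφ => ?_⟩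
  rw [hQ, integral_withDensity_eq_integral_smul hdm φ]
  have heq : (fun ω => d ω • φ ω) = fun ω => c₀⁻¹ * (φ ω * w ω) := by
    funext ω
    rw [NNReal.smul_def, smul_eq_mul, hd]
    rw [Real.coe_toNNReal _ (div_nonneg (hwn ω) hc₀pos.le)]
    ring
  rw [heq, integral_const_mul]
  exact mul_nonpos_of_nonneg_of_nonpos (inv_nonneg.mpr hc₀pos.le) (hwJ φ hφ)

end
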